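/- Let 𝒜 be a real symmetric positive semidefinite M×M matrix and τ ≥ 0 be such that ‖I − τ𝒜‖₂ ≤ 1. Then for every n ≥ 1, ‖(I + τ𝒜)^{−n} − (I − τ𝒜)ⁿ‖₂ ≤ n τ² ‖𝒜‖₂². -/

import Mathlib

open Matrix Finset

/-- The spectral norm (operator 2-norm) of a real square matrix. -/
noncomputable def spec {M : ℕ} (A : Matrix (Fin M) (Fin M) ℝ) : ℝ :=
  ‖LinearMap.toContinuousLinearMap (Matrix.toEuclideanLin A)‖

/-- The squared Frobenius norm of a real matrix. -/
noncomputable def frobSq {m l : ℕ} (A : Matrix (Fin m) (Fin l) ℝ) : ℝ :=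
  ∑ i, ∑ j, (A i j) ^ 2

/-- The squared Euclidean norm of a real vector. -/
noncomputable def vecNormSq {M : ℕ} (x : Fin M → ℝ) : ℝ := ∑ i, (x i) ^ 2

/-- The Euclidean norm of a real vector. -/
noncomputable def vecNorm {M : ℕ} (x : Fin M → ℝ) : ℝ := Real.sqrt (∑ i, (x i) ^ 2)

/-- The M×(n+1) matrix whose columns are the vectors `v 0, …, v n`. -/
noncomputable def colMat {M n : ℕ} (v : Fin (n + 1) → Fin M → ℝ) :
    Matrix (Fin M) (Fin (n + 1)) ℝ :=
  Matrix.of fun i k => v k i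

open scoped Matrix.Norms.L2Operator

lemma spec_eq_l2norm {M : ℕ} (A : Matrix (Fin M) (Fin M) ℝ) : spec A = ‖A‖ := rfl

lemma euclid_normsq {M : ℕ} (y : EuclideanSpace ℝ (Fin M)) :
    ‖y‖ ^ 2 = ∑ i, (y i) ^ 2 := by
  rw [EuclideanSpace.norm_eq, Real.sq_sqrt]
  · simp [Real.norm_eq_abs, sq_abs]
  · positivity

/-- If `𝒜` is real symmetric positive semidefinite, `τ ≥ 0` and `‖I - τ𝒜‖₂ ≤ 1`,
then for every `n ≥ 1`, `‖(I + τ𝒜)⁻ⁿ - (I - τ𝒜)ⁿ‖₂ ≤ n τ² ‖𝒜‖₂²`. -/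
theorem inverse_power_perturbation {M : ℕ} (A : Matrix (Fin M) (Fin M) ℝ)
    (hA : A.PosSemidef) (τ : ℝ) (hτ : 0 ≤ τ) (h1 : spec (1 - τ • A) ≤ 1) :
    ∀ n : ℕ, 1 ≤ n →
      spec (((1 + τ • A)⁻¹) ^ n - (1 - τ • A) ^ n) ≤ (n : ℝ) * τ ^ 2 * (spec A) ^ 2 := by
  set P : Matrix (Fin M) (Fin M) ℝ := 1 + τ • A with hPdef
  set C : Matrix (Fin M) (Fin M) ℝ := 1 - τ • A with hCdef
  set B : Matrix (Fin M) (Fin M) ℝ := P⁻¹ with hBdef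
  -- τ • A is PSD
  have hτA : (τ • A).PosSemidef := by
    refine Matrix.PosSemidef.of_dotProduct_mulVec_nonneg ?_ fun x => ?_
    · show (τ • A)ᴴ = τ • A
      rw [Matrix.conjTranspose_smul, star_trivial, hA.1]
    rw [smul_mulVec, dotProduct_smul]
    exact smul_nonneg hτ (hA.dotProduct_mulVec_nonneg x)
  have hPD : P.PosDef := Matrix.PosDef.add_posSemidef Matrix.PosDef.one hτA
  have hPunit : IsUnit P.det := (Matrix.isUnit_iff_isUnit_det P).mp hPD.isUnit
  have hPB : P * B = 1 := Matrix.mul_nonsing_inv P hPunit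
  have hBP : B * P = 1 := Matrix.nonsing_inv_mul P hPunit
  -- ‖B‖ ≤ 1
  have hBle : ‖B‖ ≤ 1 := by
    rw [Matrix.cstar_norm_def]
    refine ContinuousLinearMap.opNorm_le_bound _ zero_le_one fun x => ?_
    rw [one_mul]
    set y : EuclideanSpace ℝ (Fin M) := Matrix.toEuclideanCLM (𝕜 := ℝ) B x with hy
    have hx : Matrix.toEuclideanCLM (𝕜 := ℝ) P y = x := by
      have : Matrix.toEuclideanCLM (𝕜 := ℝ) P (Matrix.toEuclideanCLM (𝕜 := ℝ) B x)
          = Matrix.toEuclideanCLM (𝕜 := ℝ) (P * B) x := by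
        rw [_root_.map_mul]; rfl
      rw [hy, this, hPB, _root_.map_one]; rfl
    rw [← hx]
    -- show ‖y‖ ≤ ‖toEuclideanCLM P y‖
    have happ : ∀ i, (Matrix.toEuclideanCLM (𝕜 := ℝ) P y) i = (P *ᵥ (fun j => y j)) i :=
      fun i => rfl
    refine le_of_pow_le_pow_left₀ two_ne_zero (norm_nonneg _) ?_
    rw [euclid_normsq, euclid_normsq]
    simp only [happ]
    set w : Fin M → ℝ := fun j => y j with hw
    have hz : P *ᵥ w = w + τ • (A *ᵥ w) := by
      rw [hPdef, Matrix.add_mulVec, Matrix.one_mulVec, Matrix.smul_mulVec]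
    have hsum : ∀ v : Fin M → ℝ, ∑ i, (v i) ^ 2 = v ⬝ᵥ v := by
      intro v; simp [dotProduct, sq]
    rw [hsum, hsum, hz]
    have hcross : 0 ≤ w ⬝ᵥ (A *ᵥ w) := by
      have := hA.dotProduct_mulVec_nonneg w
      simpa using this
    have huu : 0 ≤ (A *ᵥ w) ⬝ᵥ (A *ᵥ w) := by
      simp only [dotProduct]
      exact Finset.sum_nonneg fun i _ => mul_self_nonneg _
    have hcomm : (A *ᵥ w) ⬝ᵥ w = w ⬝ᵥ (A *ᵥ w) := dotProduct_comm _ _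
    rw [dotProduct_add, add_dotProduct, add_dotProduct,
      dotProduct_smul, smul_dotProduct, smul_dotProduct,
      dotProduct_smul, hcomm]
    simp only [smul_eq_mul]
    nlinarith [mul_nonneg hτ hcross, mul_nonneg (mul_nonneg hτ hτ) huu]
  have hCle : ‖C‖ ≤ 1 := h1
  -- B - C = τ^2 • (A * A * B)
  have hCP : C * P = 1 - τ ^ 2 • (A * A) := by
    rw [hCdef, hPdef]
    simp only [sub_mul, mul_add, one_mul, mul_one, smul_mul_assoc, mul_smul_comm,
      smul_smul, ← pow_two]
    module
  have hkey : B - C = τ ^ 2 • (A * A * B) := by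
    calc B - C = (1 - C * P) * B := by
          rw [sub_mul, one_mul, mul_assoc, hPB, mul_one]
      _ = (τ ^ 2 • (A * A)) * B := by rw [hCP, sub_sub_cancel]
      _ = τ ^ 2 • (A * A * B) := by rw [Matrix.smul_mul]
  have hAnn : 0 ≤ ‖A‖ := norm_nonneg _
  have hBCle : ‖B - C‖ ≤ τ ^ 2 * ‖A‖ ^ 2 := by
    rw [hkey, norm_smul, Real.norm_eq_abs, abs_of_nonneg (sq_nonneg τ)]
    have h1' : ‖A * A * B‖ ≤ ‖A‖ * ‖A‖ * ‖B‖ :=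
      le_trans (norm_mul_le _ _) (by
        exact mul_le_mul_of_nonneg_right (norm_mul_le _ _) (norm_nonneg _))
    have h2' : ‖A‖ * ‖A‖ * ‖B‖ ≤ ‖A‖ ^ 2 := by
      rw [sq]
      calc ‖A‖ * ‖A‖ * ‖B‖ ≤ ‖A‖ * ‖A‖ * 1 :=
            mul_le_mul_of_nonneg_left hBle (mul_nonneg hAnn hAnn)
        _ = ‖A‖ * ‖A‖ := mul_one _
    exact mul_le_mul_of_nonneg_left (le_trans h1' h2') (sq_nonneg τ)
  -- main induction
  have main : ∀ n : ℕ, ‖B ^ n - C ^ n‖ ≤ (n : ℝ) * (τ ^ 2 * ‖A‖ ^ 2) := by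
    intro n
    induction n with
    | zero => simp
    | succ n ih =>
      have hdecomp : B ^ (n + 1) - C ^ (n + 1) = B * (B ^ n - C ^ n) + (B - C) * C ^ n := by
        rw [mul_sub, sub_mul, sub_add_sub_cancel, pow_succ', pow_succ']
      have hCn : ‖C ^ n‖ ≤ 1 := by
        rcases Nat.eq_zero_or_pos n with h0 | hpos
        · subst h0
          rw [pow_zero, Matrix.cstar_norm_def, _root_.map_one]
          exact ContinuousLinearMap.norm_id_le
        · exact (norm_pow_le' C hpos).trans (pow_le_one₀ (norm_nonneg _) hCle)
      calc ‖B ^ (n + 1) - C ^ (n + 1)‖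
          ≤ ‖B * (B ^ n - C ^ n)‖ + ‖(B - C) * C ^ n‖ := by rw [hdecomp]; exact norm_add_le _ _
        _ ≤ ‖B‖ * ‖B ^ n - C ^ n‖ + ‖B - C‖ * ‖C ^ n‖ :=
            add_le_add (norm_mul_le _ _) (norm_mul_le _ _)
        _ ≤ 1 * ((n : ℝ) * (τ ^ 2 * ‖A‖ ^ 2)) + (τ ^ 2 * ‖A‖ ^ 2) * 1 := by
            refine add_le_add (mul_le_mul hBle ih (norm_nonneg _) zero_le_one) ?_
            exact mul_le_mul hBCle hCn (norm_nonneg _) (by positivity)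
        _ = ((n : ℝ) + 1) * (τ ^ 2 * ‖A‖ ^ 2) := by ring
        _ = ((n + 1 : ℕ) : ℝ) * (τ ^ 2 * ‖A‖ ^ 2) := by push_cast; ring
  intro n _
  have := main n
  rw [spec_eq_l2norm, spec_eq_l2norm]
  calc ‖B ^ n - C ^ n‖ ≤ (n : ℝ) * (τ ^ 2 * ‖A‖ ^ 2) := this
    _ = (n : ℝ) * τ ^ 2 * ‖A‖ ^ 2 := by ring
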